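/- arXiv:2509.01002 — 3 statements merged into one kernel-verified Lean document; each statement's English description precedes it below -/
import Mathlib

section
/- Let ψ ∈ ℂ with ψ^5 ≠ 1, and let z = (z_0,…,z_4) ∈ ℂ^5 satisfy, for every index i, z_i^4 = ψ · ∏_{j ≠ i} z_j (i.e. the gradient of the Dwork polynomial P_ψ(Z) = Σ_{i=0}^4 Z_i^5 − 5ψ ∏_{i=0}^4 Z_i vanishes at z, after dividing by 5). Then z = 0. In particular, for ψ^5 ≠ 1 the quintic hypersurface X_ψ = {P_ψ = 0} ⊂ ℙ^4 is smooth. -/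
/-- If `ψ^5 ≠ 1` and `z ∈ ℂ^5` satisfies `z_i^4 = ψ · ∏_{j ≠ i} z_j` for every `i`
(vanishing of the gradient of the Dwork polynomial, divided by 5), then `z = 0`.
In particular the Dwork quintic `X_ψ` is smooth for `ψ^5 ≠ 1`. -/
theorem dwork_smooth_of_pow_five_ne_one (ψ : ℂ) (hψ : ψ ^ 5 ≠ 1)
    (z : Fin 5 → ℂ)
    (hgrad : ∀ i, z i ^ 4 = ψ * ∏ j ∈ Finset.univ.erase i, z j) :
    z = 0 := by
  have key : ∀ i, z i ^ 5 = ψ * ∏ j, z j := by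
    intro i
    have := hgrad i
    calc z i ^ 5 = z i * z i ^ 4 := by ring
      _ = z i * (ψ * ∏ j ∈ Finset.univ.erase i, z j) := by rw [this]
      _ = ψ * (z i * ∏ j ∈ Finset.univ.erase i, z j) := by ring
      _ = ψ * ∏ j, z j := by rw [Finset.mul_prod_erase _ _ (Finset.mem_univ i)]
  by_cases hz : ∃ k, z k = 0
  · obtain ⟨k, hk⟩ := hz
    have hP : (∏ j, z j) = 0 := Finset.prod_eq_zero (Finset.mem_univ k) hk
    funext i
    have : z i ^ 5 = 0 := by rw [key i, hP, mul_zero]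
    simpa using pow_eq_zero_iff (n := 5) (by norm_num) |>.mp this
  · exfalso
    push_neg at hz
    have hP : (∏ j, z j) ≠ 0 := Finset.prod_ne_zero_iff.mpr fun i _ => hz i
    have h1 : (∏ j, z j) ^ 5 = ψ ^ 5 * (∏ j, z j) ^ 5 := by
      calc (∏ j, z j) ^ 5 = ∏ i, z i ^ 5 := by
            rw [Finset.prod_pow]
        _ = ∏ _i : Fin 5, (ψ * ∏ j, z j) := Finset.prod_congr rfl fun i _ => key i
        _ = (ψ * ∏ j, z j) ^ 5 := by simp [Finset.prod_const]
        _ = ψ ^ 5 * (∏ j, z j) ^ 5 := by ring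
    field_simp at h1
    exact hψ h1.symm
end

section
/- Let t ∈ ℂ. If z, w ∈ ℂ^4 satisfy Σ_{i=1}^4 z_i^2 = 0 = Σ_{i=1}^4 w_i^2, ‖z‖² > |t|/2, ‖w‖² > |t|/2, and Φ_t(z) = Φ_t(w), then z = w. That is, Φ_t is injective on V_0 ∩ {‖z‖² > |t|/2}. -/
open Finset

/-- Auxiliary: the norm of `v + e·v̄` when `∑ v_i² = 0`. -/
lemma conifold_aux (v : Fin 4 → ℂ) (hv : ∑ i, v i ^ 2 = 0) (e : ℂ) :
    ∑ i, Complex.normSq (v i + e * (starRingEnd ℂ) (v i))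
      = (1 + Complex.normSq e) * ∑ i, Complex.normSq (v i) := by
  have key : ∀ i, Complex.normSq (v i + e * (starRingEnd ℂ) (v i))
      = (1 + Complex.normSq e) * Complex.normSq (v i)
        + 2 * ((starRingEnd ℂ) e * v i ^ 2).re := by
    intro i
    rw [Complex.normSq_add, Complex.normSq_mul, Complex.normSq_conj]
    ring_nf
    rw [show v i * (starRingEnd ℂ) (e * (starRingEnd ℂ) (v i))
        = (starRingEnd ℂ) e * v i ^ 2 by simp [mul_comm, mul_left_comm]; ring]
    ring
  rw [Finset.sum_congr rfl fun i _ => key i, Finset.sum_add_distrib, ← Finset.mul_sum]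
  have : ∑ x : Fin 4, 2 * ((starRingEnd ℂ) e * v x ^ 2).re
      = 2 * ((starRingEnd ℂ) e * ∑ i, v i ^ 2).re := by
    rw [Finset.mul_sum, Complex.re_sum, Finset.mul_sum]
  rw [this, hv, mul_zero, Complex.zero_re, mul_zero, add_zero]

/-- The nearest point projection map `Φ_t(z) = z + (t/(2‖z‖²))·z̄`. -/
noncomputable def conifoldPhi (t : ℂ) (z : Fin 4 → ℂ) : Fin 4 → ℂ :=
  fun i => z i + t / (2 * ((∑ j, Complex.normSq (z j) : ℝ) : ℂ)) * (starRingEnd ℂ) (z i)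

/-- `Φ_t` is injective on `V_0 ∩ {‖z‖² > |t|/2}`. -/
theorem conifoldPhi_injective (t : ℂ) (z w : Fin 4 → ℂ)
    (hz0 : ∑ i, z i ^ 2 = 0) (hw0 : ∑ i, w i ^ 2 = 0)
    (hz : ‖t‖ / 2 < ∑ i, Complex.normSq (z i))
    (hw : ‖t‖ / 2 < ∑ i, Complex.normSq (w i))
    (h : conifoldPhi t z = conifoldPhi t w) :
    z = w := by
  set A : ℝ := ∑ i, Complex.normSq (z i) with hAdef
  set B : ℝ := ∑ i, Complex.normSq (w i) with hBdef
  have habs : 0 ≤ ‖t‖ := norm_nonneg t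
  have hApos : 0 < A := lt_of_le_of_lt (by positivity) hz
  have hBpos : 0 < B := lt_of_le_of_lt (by positivity) hw
  have hk : Complex.normSq t = ‖t‖ ^ 2 := (Complex.sq_norm t).symm
  have hkA : Complex.normSq t < 4 * A ^ 2 := by nlinarith
  have hkB : Complex.normSq t < 4 * B ^ 2 := by nlinarith
  set c : ℂ := t / (2 * (A : ℂ)) with hcdef
  set d : ℂ := t / (2 * (B : ℂ)) with hddef
  have hc : Complex.normSq c = Complex.normSq t / (4 * A ^ 2) := by
    rw [hcdef, Complex.normSq_div, Complex.normSq_mul, Complex.normSq_ofReal]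
    norm_num [Complex.normSq]
    ring_nf
  have hd : Complex.normSq d = Complex.normSq t / (4 * B ^ 2) := by
    rw [hddef, Complex.normSq_div, Complex.normSq_mul, Complex.normSq_ofReal]
    norm_num [Complex.normSq]
    ring_nf
  have hphi : ∀ i, z i + c * (starRingEnd ℂ) (z i) = w i + d * (starRingEnd ℂ) (w i) := by
    intro i
    have := congrFun h i
    simpa [conifoldPhi, ← hAdef, ← hBdef, ← hcdef, ← hddef] using this
  -- equality of norms
  have hnorm : (1 + Complex.normSq c) * A = (1 + Complex.normSq d) * B := by
    rw [hAdef, hBdef, ← conifold_aux z hz0 c, ← conifold_aux w hw0 d]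
    exact Finset.sum_congr rfl fun i _ => by rw [hphi i]
  have hAB : A = B := by
    rw [hc, hd] at hnorm
    have h1 : 4 * A * B * ((1 + Complex.normSq t / (4 * A ^ 2)) * A)
        = 4 * A * B * ((1 + Complex.normSq t / (4 * B ^ 2)) * B) := by rw [hnorm]
    field_simp at h1
    have hne : (16 * A ^ 2 * B ^ 2 : ℝ) ≠ 0 := by positivity
    have h2 : (B - A) * (Complex.normSq t - 4 * A * B) = 0 := by
      apply mul_left_cancel₀ hne
      linear_combination (16 * A ^ 2 * B ^ 2) * h1
    have hkAB : Complex.normSq t < 4 * A * B := by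
      nlinarith [Complex.normSq_nonneg t, mul_pos hApos hBpos]
    rcases mul_eq_zero.mp h2 with h3 | h3 <;> linarith
  have hcd : c = d := by rw [hcdef, hddef, hAB]
  funext i
  have hi := hphi i
  rw [← hcd] at hi
  have hdi : z i - w i = -c * (starRingEnd ℂ) (z i - w i) := by
    rw [map_sub]; ring_nf; linear_combination hi
  have hns : Complex.normSq (z i - w i) = Complex.normSq c * Complex.normSq (z i - w i) := by
    calc Complex.normSq (z i - w i) = Complex.normSq (-c * (starRingEnd ℂ) (z i - w i)) := by
          rw [← hdi]
      _ = Complex.normSq c * Complex.normSq (z i - w i) := by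
          rw [Complex.normSq_mul, Complex.normSq_neg, Complex.normSq_conj]
  have hclt : Complex.normSq c < 1 := by
    rw [hc]
    rw [div_lt_one (by positivity)]
    exact hkA
  have : Complex.normSq (z i - w i) = 0 := by nlinarith [Complex.normSq_nonneg (z i - w i)]
  have := Complex.normSq_eq_zero.mp this
  exact sub_eq_zero.mp this
end

section
/- For real τ > 1 define u(τ) = (τ²−1)^{-1/2} · (τ·√(τ²−1) − log(τ + √(τ²−1)))^{1/3} (real cube root). Then u satisfies, for every τ > 1, the equation τ·u(τ)³ + (τ²−1)·u(τ)²·u'(τ) = 2/3. (Here u = f' for the Candelas–de la Ossa potential f on the smoothed conifold V_1, and the equation is the reduced complex Monge–Ampère equation with c = 2/3.) -/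
/-- The derivative of the Candelas–de la Ossa potential on the smoothed conifold `V_1`,
`u(τ) = (τ²−1)^{-1/2}(τ√(τ²−1) − log(τ+√(τ²−1)))^{1/3}`, satisfies the reduced
complex Monge–Ampère equation `τu³ + (τ²−1)u²u' = 2/3` for `τ > 1`. -/
theorem cdl_ossa_potential_solves_MA :
    ∀ τ : ℝ, 1 < τ →
      τ * (fun τ : ℝ => (τ ^ 2 - 1) ^ (-(1 : ℝ) / 2) *
            (τ * Real.sqrt (τ ^ 2 - 1) - Real.log (τ + Real.sqrt (τ ^ 2 - 1))) ^ ((1 : ℝ) / 3)) τ ^ 3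
        + (τ ^ 2 - 1) *
          (fun τ : ℝ => (τ ^ 2 - 1) ^ (-(1 : ℝ) / 2) *
            (τ * Real.sqrt (τ ^ 2 - 1) - Real.log (τ + Real.sqrt (τ ^ 2 - 1))) ^ ((1 : ℝ) / 3)) τ ^ 2
          * deriv (fun τ : ℝ => (τ ^ 2 - 1) ^ (-(1 : ℝ) / 2) *
            (τ * Real.sqrt (τ ^ 2 - 1) - Real.log (τ + Real.sqrt (τ ^ 2 - 1))) ^ ((1 : ℝ) / 3)) τ
        = 2 / 3 := by
  intro τ hτ
  have hv : (0:ℝ) < τ ^ 2 - 1 := by nlinarith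
  set s : ℝ := Real.sqrt (τ ^ 2 - 1) with hs
  have hs2 : s ^ 2 = τ ^ 2 - 1 := Real.sq_sqrt hv.le
  have hspos : 0 < s := Real.sqrt_pos.mpr hv
  have hτs : (0:ℝ) < τ + s := by linarith
  have hτs1 : (1:ℝ) < τ + s := by linarith
  -- positivity of g
  have hg : (0:ℝ) < τ * s - Real.log (τ + s) := by
    have h1 : Real.log (τ + s) < Real.sinh (Real.log (τ + s)) :=
      Real.self_lt_sinh_iff.mpr (Real.log_pos hτs1)
    rw [Real.sinh_log hτs] at h1
    have h2 : (τ + s)⁻¹ = τ - s :=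
      inv_eq_of_mul_eq_one_right (by nlinarith [hs2])
    rw [h2] at h1
    nlinarith [hs2, hspos, hτ]
  -- derivatives
  have h1 : HasDerivAt (fun x : ℝ => x ^ 2 - 1) (2 * τ) τ := by
    simpa using (hasDerivAt_pow 2 τ).sub_const 1
  have hsqrt : HasDerivAt (fun x : ℝ => Real.sqrt (x ^ 2 - 1)) (τ / s) τ := by
    have := (Real.hasDerivAt_sqrt hv.ne').comp τ h1
    rw [show τ / s = 1 / (2 * Real.sqrt (τ ^ 2 - 1)) * (2 * τ) by rw [← hs]; ring]
    exact this
  have hA : HasDerivAt (fun x : ℝ => x * Real.sqrt (x ^ 2 - 1)) (1 * s + τ * (τ / s)) τ := by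
    exact (hasDerivAt_id τ).mul hsqrt
  have hB : HasDerivAt (fun x : ℝ => Real.log (x + Real.sqrt (x ^ 2 - 1)))
      ((1 + τ / s) / (τ + s)) τ := by
    have := ((hasDerivAt_id τ).add hsqrt).log hτs.ne'
    simpa using this
  have hgd : HasDerivAt (fun x : ℝ => x * Real.sqrt (x ^ 2 - 1)
      - Real.log (x + Real.sqrt (x ^ 2 - 1))) (2 * s) τ := by
    refine (hA.sub hB).congr_deriv ?_
    have hsne := hspos.ne'
    have hts := hτs.ne'
    field_simp
    linear_combination (-s - τ) * hs2
  have hr1 : HasDerivAt (fun x : ℝ => (x ^ 2 - 1) ^ (-(1:ℝ) / 2))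
      ((-(1:ℝ) / 2 * (τ ^ 2 - 1) ^ (-(1:ℝ) / 2 - 1)) * (2 * τ)) τ :=
    by have := (Real.hasDerivAt_rpow_const (x := τ ^ 2 - 1) (p := -(1:ℝ)/2) (Or.inl hv.ne')).comp τ h1; exact this
  have hr2 : HasDerivAt (fun x : ℝ => (x * Real.sqrt (x ^ 2 - 1)
        - Real.log (x + Real.sqrt (x ^ 2 - 1))) ^ ((1:ℝ) / 3))
      (((1:ℝ) / 3 * (τ * s - Real.log (τ + s)) ^ ((1:ℝ) / 3 - 1)) * (2 * s)) τ :=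
    by have := (Real.hasDerivAt_rpow_const (x := τ * s - Real.log (τ + s)) (p := (1:ℝ)/3) (Or.inl hg.ne')).comp τ hgd; exact this
  have hu : HasDerivAt (fun x : ℝ => (x ^ 2 - 1) ^ (-(1:ℝ) / 2) * (x * Real.sqrt (x ^ 2 - 1)
      - Real.log (x + Real.sqrt (x ^ 2 - 1))) ^ ((1:ℝ) / 3)) _ τ := hr1.mul hr2
  simp only
  rw [hu.deriv]
  -- algebra
  set g : ℝ := τ * s - Real.log (τ + s) with hgdef
  set G : ℝ := g ^ ((1:ℝ) / 3) with hGdef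
  have hG3 : G ^ 3 = g := by
    rw [hGdef, ← Real.rpow_natCast (g ^ ((1:ℝ)/3)) 3, ← Real.rpow_mul hg.le]
    norm_num
  have hGpos : 0 < G := Real.rpow_pos_of_pos hg _
  have e1 : (τ ^ 2 - 1) ^ (-(1:ℝ) / 2) = s⁻¹ := by
    rw [← hs2, ← Real.rpow_natCast s 2, ← Real.rpow_mul hspos.le, ← Real.rpow_neg_one s]
    norm_num
  have e2 : (τ ^ 2 - 1) ^ (-(1:ℝ) / 2 - 1) = s⁻¹ * (s ^ 2)⁻¹ := by
    rw [Real.rpow_sub hv, Real.rpow_one, e1, hs2]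
    ring
  have e3 : g ^ ((1:ℝ) / 3 - 1) = G / g := by
    rw [Real.rpow_sub hg, Real.rpow_one, hGdef]
  rw [e1, e2, e3, ← hG3, hs2]
  have hGne := hGpos.ne'
  have hsne := hspos.ne'
  field_simp
  linear_combination (-2 * s) * hs2
end
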